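/- Let T, S ∈ B_A(H). Then max{‖T+S‖_A², ‖T−S‖_A²} − ‖TT^{♯_A} + SS^{♯_A}‖_A ≤ 2ω_A(TS^{♯_A}). -/

import Mathlib

open ContinuousLinearMap

/-- The `A`-seminorm of a vector: `‖x‖_A = √⟨Ax, x⟩`. -/
noncomputable def vnormA {H : Type*} [NormedAddCommGroup H] [InnerProductSpace ℂ H]
    (A : H →L[ℂ] H) (x : H) : ℝ :=
  Real.sqrt (RCLike.re (inner ℂ (A x) x : ℂ))

/-- `T` is `A`-bounded, i.e. `T ∈ B_{A^{1/2}}(H)`. -/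
def ABounded {H : Type*} [NormedAddCommGroup H] [InnerProductSpace ℂ H]
    (A T : H →L[ℂ] H) : Prop :=
  ∃ c : ℝ, 0 < c ∧ ∀ x, vnormA A (T x) ≤ c * vnormA A x

/-- The `A`-operator seminorm `‖T‖_A = sup{‖Tx‖_A : ‖x‖_A = 1}`. -/
noncomputable def opNormA {H : Type*} [NormedAddCommGroup H] [InnerProductSpace ℂ H]
    (A T : H →L[ℂ] H) : ℝ :=
  sSup {c : ℝ | ∃ x : H, vnormA A x = 1 ∧ c = vnormA A (T x)}

/-- The `A`-numerical radius `ω_A(T) = sup{|⟨ATx, x⟩| : ‖x‖_A = 1}`. -/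
noncomputable def wA {H : Type*} [NormedAddCommGroup H] [InnerProductSpace ℂ H]
    (A T : H →L[ℂ] H) : ℝ :=
  sSup {c : ℝ | ∃ x : H, vnormA A x = 1 ∧ c = ‖(inner ℂ (A (T x)) x : ℂ)‖}

/-- `Ts` is the reduced (Douglas) solution of `AX = T*A`, i.e. `Ts = T^{♯_A}`. -/
def IsReducedAdjoint {H : Type*} [NormedAddCommGroup H] [InnerProductSpace ℂ H]
    [CompleteSpace H] (A T Ts : H →L[ℂ] H) : Prop :=
  A ∘L Ts = (ContinuousLinearMap.adjoint T) ∘L A ∧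
    ∀ y, Ts y ∈ closure (Set.range A)

/-- The `2 × 2` operator matrix `[[P, Q], [R, S]]` acting on `H ⊕ H` (with the `ℓ²` product
inner product). -/
noncomputable def blk {H : Type*} [NormedAddCommGroup H] [InnerProductSpace ℂ H]
    (P Q R S : H →L[ℂ] H) : WithLp 2 (H × H) →L[ℂ] WithLp 2 (H × H) :=
  letI e := (WithLp.prodContinuousLinearEquiv 2 ℂ H H)
  (e.symm.toContinuousLinearMap) ∘L
    ((P.comp (fst ℂ H H) + Q.comp (snd ℂ H H)).prod
      (R.comp (fst ℂ H H) + S.comp (snd ℂ H H))) ∘L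
    (e.toContinuousLinearMap)

/-- `𝔸 = diag(A, A)` on `H ⊕ H`. -/
noncomputable def AA {H : Type*} [NormedAddCommGroup H] [InnerProductSpace ℂ H]
    (A : H →L[ℂ] H) : WithLp 2 (H × H) →L[ℂ] WithLp 2 (H × H) :=
  blk A 0 0 A

section Aux

variable {H : Type*} [NormedAddCommGroup H] [InnerProductSpace ℂ H] [CompleteSpace H]

local notation "⟪" x ", " y "⟫" => @inner ℂ _ _ x y

/-- `Rs` is an `A`-adjoint of `R` in the weak (sesquilinear) sense. -/
def AdjPair (A R Rs : H →L[ℂ] H) : Prop := ∀ x y : H, ⟪A (R x), y⟫ = ⟪A x, Rs y⟫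

/-- `B` is a self-adjoint square root of `A`. -/
structure SqrtData (A B : H →L[ℂ] H) : Prop where
  sym : ∀ x y : H, ⟪B x, y⟫ = ⟪x, B y⟫
  sq : ∀ x : H, B (B x) = A x

set_option synthInstance.maxHeartbeats 1000000 in
lemma sqrtData_exists (A : H →L[ℂ] H) (hA : A.IsPositive) : ∃ B, SqrtData A B := by
  have h0 : (0 : H →L[ℂ] H) ≤ A := (ContinuousLinearMap.nonneg_iff_isPositive A).2 hA
  refine ⟨CFC.sqrt A, ?_, ?_⟩
  · have hpos : (0 : H →L[ℂ] H) ≤ CFC.sqrt A := CFC.sqrt_nonneg (a := A)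
    have hsa : IsSelfAdjoint (CFC.sqrt A) :=
      ((ContinuousLinearMap.nonneg_iff_isPositive _).1 hpos).isSelfAdjoint
    exact fun x y => hsa.isSymmetric x y
  · intro x
    have : CFC.sqrt A * CFC.sqrt A = A := CFC.sqrt_mul_sqrt_self A h0
    calc CFC.sqrt A (CFC.sqrt A x) = (CFC.sqrt A * CFC.sqrt A) x := rfl
    _ = A x := by rw [this]

variable {A B : H →L[ℂ] H} (hB : SqrtData A B)

include hB

lemma innerA (x y : H) : ⟪A x, y⟫ = ⟪B x, B y⟫ := by
  rw [← hB.sq x]; exact hB.sym (B x) y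

lemma vnorm_eq (x : H) : vnormA A x = ‖B x‖ := by
  rw [vnormA, innerA hB, inner_self_eq_norm_sq, Real.sqrt_sq (norm_nonneg _)]

lemma normB_sq (x : H) : ‖B x‖ ^ 2 = RCLike.re ⟪A x, x⟫ := by
  rw [innerA hB, inner_self_eq_norm_sq]

lemma hAsym (x y : H) : ⟪A x, y⟫ = ⟪x, A y⟫ := by
  rw [innerA hB, hB.sym, hB.sq]

/-- Cauchy–Schwarz for the `A`-inner product. -/
lemma csA (x y : H) : ‖⟪A x, y⟫‖ ≤ ‖B x‖ * ‖B y‖ := by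
  rw [innerA hB]; exact norm_inner_le_norm _ _

lemma adjPair_symm {R Rs : H →L[ℂ] H} (h : AdjPair A R Rs) : AdjPair A Rs R := by
  intro x y
  have h1 : ⟪A (Rs x), y⟫ = (starRingEnd ℂ) ⟪A y, Rs x⟫ := by
    rw [← inner_conj_symm, hAsym hB]
  rw [h1, ← h y x, hAsym hB, inner_conj_symm]

lemma adjPair_comp {R Rs U Us : H →L[ℂ] H} (h1 : AdjPair A R Rs) (h2 : AdjPair A U Us) :
    AdjPair A (R ∘L U) (Us ∘L Rs) := by
  intro x y
  simp only [ContinuousLinearMap.comp_apply]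
  rw [h1, h2]

lemma adjPair_add {R Rs U Us : H →L[ℂ] H} (h1 : AdjPair A R Rs) (h2 : AdjPair A U Us) :
    AdjPair A (R + U) (Rs + Us) := by
  intro x y
  simp only [ContinuousLinearMap.add_apply, map_add, inner_add_left, inner_add_right]
  rw [h1, h2]

lemma adjPair_neg {R Rs : H →L[ℂ] H} (h1 : AdjPair A R Rs) : AdjPair A (-R) (-Rs) := by
  intro x y
  simp only [ContinuousLinearMap.neg_apply, map_neg, inner_neg_left, inner_neg_right]
  rw [h1]

omit hB

/-- key boundedness lemma for `A`-selfadjoint operators. -/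
lemma key_bound (hB : SqrtData A B) {P : H →L[ℂ] H} (hP : AdjPair A P P) (x : H) :
    ‖B (P x)‖ ≤ ‖P‖ * ‖B x‖ := by
  have shift : ∀ (k : ℕ) (y z : H), ⟪A ((P ^ k) y), z⟫ = ⟪A y, (P ^ k) z⟫ := by
    intro k
    induction k with
    | zero => simp
    | succ n ih =>
      intro y z
      have e1 : (P ^ (n + 1)) y = (P ^ n) (P y) := by
        rw [pow_succ, ContinuousLinearMap.mul_apply]
      have e2 : (P ^ (n + 1)) z = P ((P ^ n) z) := by
        rw [pow_succ', ContinuousLinearMap.mul_apply]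
      rw [e1, e2, ih (P y) z, hP]
  set a : ℕ → ℝ := fun k => ‖B ((P ^ k) x)‖ with ha
  have ha0 : ∀ k, 0 ≤ a k := fun k => norm_nonneg _
  have hkey : ∀ k, a k ^ 2 ≤ a (2 * k) * a 0 := by
    intro k
    have h1 : a k ^ 2 = RCLike.re ⟪A ((P ^ k) x), (P ^ k) x⟫ := normB_sq hB _
    have h2 : (P ^ k) ((P ^ k) x) = (P ^ (2 * k)) x := by
      rw [two_mul, pow_add, ContinuousLinearMap.mul_apply]
    rw [h1, shift k x, h2, innerA hB]
    calc RCLike.re ⟪B x, B ((P ^ (2 * k)) x)⟫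
        ≤ ‖(⟪B x, B ((P ^ (2 * k)) x)⟫ : ℂ)‖ := RCLike.re_le_norm _
      _ ≤ ‖B x‖ * ‖B ((P ^ (2 * k)) x)‖ := norm_inner_le_norm _ _
      _ = a (2 * k) * a 0 := mul_comm _ _
  have hbound : ∀ k : ℕ, 0 < k → a k ≤ ‖B‖ * ‖x‖ * ‖P‖ ^ k := by
    intro k hk
    have h5 : ‖(P ^ k) x‖ ≤ ‖P‖ ^ k * ‖x‖ :=
      le_trans (ContinuousLinearMap.le_opNorm _ _)
        (mul_le_mul_of_nonneg_right (norm_pow_le' P hk) (norm_nonneg x))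
    calc a k ≤ ‖B‖ * ‖(P ^ k) x‖ := ContinuousLinearMap.le_opNorm _ _
      _ ≤ ‖B‖ * (‖P‖ ^ k * ‖x‖) := mul_le_mul_of_nonneg_left h5 (norm_nonneg _)
      _ = ‖B‖ * ‖x‖ * ‖P‖ ^ k := by ring
  by_contra hcon
  push_neg at hcon
  have hA1 : ‖P‖ * a 0 < a 1 := by simpa [ha] using hcon
  rcases eq_or_lt_of_le (ha0 0) with h00 | h00
  · have := hkey 1
    rw [← h00, mul_zero] at this
    have h10 : a 1 = 0 := by nlinarith [ha0 1]
    rw [h10, ← h00, mul_zero] at hA1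
    exact lt_irrefl 0 hA1
  rcases eq_or_lt_of_le (norm_nonneg P) with hP0 | hP0
  · have : P = 0 := by rw [← norm_eq_zero]; exact hP0.symm
    have h10 : a 1 = 0 := by simp [ha, this]
    rw [h10, ← hP0, zero_mul] at hA1
    exact lt_irrefl 0 hA1
  · have claim : ∀ n : ℕ, (a 1 / a 0) ^ (2 ^ n) ≤ a (2 ^ n) / a 0 := by
      intro n
      induction n with
      | zero => simp
      | succ n ih =>
        have e : (2 : ℕ) ^ (n + 1) = 2 ^ n * 2 := by rw [pow_succ]
        calc (a 1 / a 0) ^ (2 ^ (n + 1)) = ((a 1 / a 0) ^ (2 ^ n)) ^ 2 := by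
              rw [e, pow_mul]
          _ ≤ (a (2 ^ n) / a 0) ^ 2 := by
              apply pow_le_pow_left₀ (by positivity) ih
          _ = a (2 ^ n) ^ 2 / a 0 ^ 2 := by rw [div_pow]
          _ ≤ (a (2 * 2 ^ n) * a 0) / a 0 ^ 2 := by
              apply div_le_div_of_nonneg_right (hkey (2 ^ n)) (by positivity) |>.trans_eq rfl
          _ = a (2 ^ (n + 1)) / a 0 := by
              rw [sq]
              rw [show 2 * 2 ^ n = 2 ^ (n + 1) by rw [pow_succ']]
              field_simp
    set r : ℝ := a 1 / (a 0 * ‖P‖) with hr_def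
    have hr : 1 < r := by
      rw [hr_def, lt_div_iff₀ (by positivity), one_mul, mul_comm]
      exact hA1
    have hK : ∀ n : ℕ, r ^ (2 ^ n) ≤ ‖B‖ * ‖x‖ / a 0 := by
      intro n
      have h1 : r = (a 1 / a 0) / ‖P‖ := by rw [hr_def, div_div]
      have h2 : r ^ (2 ^ n) = (a 1 / a 0) ^ (2 ^ n) / ‖P‖ ^ (2 ^ n) := by
        rw [h1, div_pow]
      rw [h2]
      rw [div_le_div_iff₀ (by positivity) h00]
      have h3 : (a 1 / a 0) ^ 2 ^ n ≤ a (2 ^ n) / a 0 := claim n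
      have h4 : a (2 ^ n) ≤ ‖B‖ * ‖x‖ * ‖P‖ ^ (2 ^ n) :=
        hbound _ (Nat.pow_pos (by norm_num))
      calc (a 1 / a 0) ^ 2 ^ n * a 0 ≤ (a (2 ^ n) / a 0) * a 0 := by
            apply mul_le_mul_of_nonneg_right h3 (ha0 0)
        _ = a (2 ^ n) := by field_simp
        _ ≤ ‖B‖ * ‖x‖ * ‖P‖ ^ (2 ^ n) := h4
    obtain ⟨n, hn⟩ := pow_unbounded_of_one_lt (‖B‖ * ‖x‖ / a 0) hr
    have hmono : r ^ n ≤ r ^ (2 ^ n) :=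
      pow_le_pow_right₀ hr.le (Nat.lt_two_pow_self (n := n)).le
    linarith [hK n]

end Aux

section Aux2

variable {H : Type*} [NormedAddCommGroup H] [InnerProductSpace ℂ H] [CompleteSpace H]

local notation "⟪" x ", " y "⟫" => @inner ℂ _ _ x y

variable {A B : H →L[ℂ] H}

lemma mul_bound (hB : SqrtData A B) {R Rs : H →L[ℂ] H} (hR : AdjPair A R Rs) (x : H) :
    ‖B (R x)‖ ≤ Real.sqrt ‖Rs ∘L R‖ * ‖B x‖ := by
  have hP : AdjPair A (Rs ∘L R) (Rs ∘L R) := adjPair_comp hB (adjPair_symm hB hR) hR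
  have h2 : ‖B (R x)‖ ^ 2 ≤ ‖Rs ∘L R‖ * ‖B x‖ ^ 2 := by
    have e1 : ‖B (R x)‖ ^ 2 = RCLike.re ⟪A (R x), R x⟫ := normB_sq hB _
    have e2 : ⟪A x, Rs (R x)⟫ = ⟪B x, B ((Rs ∘L R) x)⟫ := by rw [innerA hB]; rfl
    rw [e1, hR x (R x), e2]
    calc RCLike.re ⟪B x, B ((Rs ∘L R) x)⟫ ≤ ‖(⟪B x, B ((Rs ∘L R) x)⟫ : ℂ)‖ :=
          RCLike.re_le_norm _
      _ ≤ ‖B x‖ * ‖B ((Rs ∘L R) x)‖ := norm_inner_le_norm _ _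
      _ ≤ ‖B x‖ * (‖Rs ∘L R‖ * ‖B x‖) :=
          mul_le_mul_of_nonneg_left (key_bound hB hP x) (norm_nonneg _)
      _ = ‖Rs ∘L R‖ * ‖B x‖ ^ 2 := by ring
  calc ‖B (R x)‖ = Real.sqrt (‖B (R x)‖ ^ 2) := (Real.sqrt_sq (norm_nonneg _)).symm
    _ ≤ Real.sqrt (‖Rs ∘L R‖ * ‖B x‖ ^ 2) := Real.sqrt_le_sqrt h2
    _ = Real.sqrt ‖Rs ∘L R‖ * ‖B x‖ := by
        rw [Real.sqrt_mul (norm_nonneg _), Real.sqrt_sq (norm_nonneg _)]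

lemma opNormA_nonneg (A R : H →L[ℂ] H) : 0 ≤ opNormA A R := by
  apply Real.sSup_nonneg
  rintro c ⟨x, hx, rfl⟩
  exact Real.sqrt_nonneg _

lemma wA_nonneg (A R : H →L[ℂ] H) : 0 ≤ wA A R := by
  apply Real.sSup_nonneg
  rintro c ⟨x, hx, rfl⟩
  exact norm_nonneg _

lemma bddAbove_opSet (hB : SqrtData A B) {R Rs : H →L[ℂ] H} (hR : AdjPair A R Rs) :
    BddAbove {c : ℝ | ∃ x : H, vnormA A x = 1 ∧ c = vnormA A (R x)} := by
  refine ⟨Real.sqrt ‖Rs ∘L R‖, ?_⟩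
  rintro c ⟨x, hx, rfl⟩
  rw [vnorm_eq hB] at hx ⊢
  calc ‖B (R x)‖ ≤ Real.sqrt ‖Rs ∘L R‖ * ‖B x‖ := mul_bound hB hR x
    _ = Real.sqrt ‖Rs ∘L R‖ := by rw [hx, mul_one]

lemma le_opNormA (hB : SqrtData A B) {R Rs : H →L[ℂ] H} (hR : AdjPair A R Rs) (z : H) :
    vnormA A (R z) ≤ opNormA A R * vnormA A z := by
  have hvnn : 0 ≤ vnormA A z := Real.sqrt_nonneg _
  rcases eq_or_lt_of_le hvnn with h0 | h0
  · have hz : ‖B z‖ = 0 := by rw [← vnorm_eq hB, ← h0]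
    have h1 : vnormA A (R z) ≤ 0 := by
      rw [vnorm_eq hB]
      calc ‖B (R z)‖ ≤ Real.sqrt ‖Rs ∘L R‖ * ‖B z‖ := mul_bound hB hR z
        _ = 0 := by rw [hz, mul_zero]
    calc vnormA A (R z) ≤ 0 := h1
      _ = opNormA A R * vnormA A z := by rw [← h0, mul_zero]
  · set t : ℝ := vnormA A z with ht_def
    have htB : t = ‖B z‖ := vnorm_eq hB z
    have hnx : vnormA A ((((t⁻¹ : ℝ) : ℂ)) • z) = 1 := by
      rw [vnorm_eq hB, map_smul, norm_smul, Complex.norm_real, Real.norm_eq_abs,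
        abs_of_pos (inv_pos.2 h0), ← htB, inv_mul_cancel₀ (ne_of_gt h0)]
    have hmem : vnormA A (R ((((t⁻¹ : ℝ) : ℂ)) • z)) ∈
        {c : ℝ | ∃ x : H, vnormA A x = 1 ∧ c = vnormA A (R x)} := by
      exact ⟨_, hnx, rfl⟩
    have hle : vnormA A (R ((((t⁻¹ : ℝ) : ℂ)) • z)) ≤ opNormA A R :=
      le_csSup (bddAbove_opSet hB hR) hmem
    have hval : vnormA A (R ((((t⁻¹ : ℝ) : ℂ)) • z)) = t⁻¹ * vnormA A (R z) := by
      rw [map_smul, vnorm_eq hB, map_smul, norm_smul, Complex.norm_real, Real.norm_eq_abs,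
        abs_of_pos (inv_pos.2 h0), vnorm_eq hB]
    rw [hval] at hle
    calc vnormA A (R z) = t * (t⁻¹ * vnormA A (R z)) := by
          field_simp
      _ ≤ t * opNormA A R := mul_le_mul_of_nonneg_left hle (le_of_lt h0)
      _ = opNormA A R * vnormA A z := by rw [mul_comm]

lemma le_wA (hB : SqrtData A B) {R Rs : H →L[ℂ] H} (hR : AdjPair A R Rs) (x : H)
    (hx : vnormA A x = 1) : ‖(⟪A (R x), x⟫ : ℂ)‖ ≤ wA A R := by
  have hmem : ‖(⟪A (R x), x⟫ : ℂ)‖ ∈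
      {c : ℝ | ∃ y : H, vnormA A y = 1 ∧ c = ‖(⟪A (R y), y⟫ : ℂ)‖} := by
    exact ⟨x, hx, rfl⟩
  apply le_csSup _ hmem
  refine ⟨Real.sqrt ‖Rs ∘L R‖, ?_⟩
  rintro c ⟨y, hy, rfl⟩
  rw [vnorm_eq hB] at hy
  calc ‖(⟪A (R y), y⟫ : ℂ)‖ ≤ ‖B (R y)‖ * ‖B y‖ := csA hB _ _
    _ ≤ (Real.sqrt ‖Rs ∘L R‖ * ‖B y‖) * ‖B y‖ :=
        mul_le_mul_of_nonneg_right (mul_bound hB hR y) (norm_nonneg _)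
    _ = Real.sqrt ‖Rs ∘L R‖ := by rw [hy]; ring

lemma opNormA_le {R : H →L[ℂ] H} {M : ℝ}
    (h : ∀ x, vnormA A x = 1 → vnormA A (R x) ≤ M) (hM : 0 ≤ M) : opNormA A R ≤ M := by
  apply Real.sSup_le _ hM
  rintro c ⟨x, hx, rfl⟩
  exact h x hx

lemma opNormA_sharp (hB : SqrtData A B) {R Rs : H →L[ℂ] H} (hR : AdjPair A R Rs) :
    opNormA A R = opNormA A Rs := by
  have main : ∀ U Us : H →L[ℂ] H, AdjPair A U Us → opNormA A U ≤ opNormA A Us := by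
    intro U Us hU
    apply opNormA_le _ (opNormA_nonneg A Us)
    intro x hx
    have h1 : vnormA A (U x) ^ 2 = RCLike.re ⟪A (U x), U x⟫ := by
      rw [vnorm_eq hB]; exact normB_sq hB _
    have h2 : RCLike.re ⟪A x, Us (U x)⟫ ≤ vnormA A x * vnormA A (Us (U x)) := by
      rw [vnorm_eq hB, vnorm_eq hB]
      exact (RCLike.re_le_norm _).trans (csA hB _ _)
    have h3 : vnormA A (Us (U x)) ≤ opNormA A Us * vnormA A (U x) :=
      le_opNormA hB (adjPair_symm hB hU) _
    have h4 : vnormA A (U x) ^ 2 ≤ opNormA A Us * vnormA A (U x) := by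
      rw [h1, hU x (U x)]
      calc RCLike.re ⟪A x, Us (U x)⟫ ≤ vnormA A x * vnormA A (Us (U x)) := h2
        _ = vnormA A (Us (U x)) := by rw [hx, one_mul]
        _ ≤ opNormA A Us * vnormA A (U x) := h3
    have hc : 0 ≤ vnormA A (U x) := Real.sqrt_nonneg _
    rcases eq_or_lt_of_le hc with hc0 | hc0
    · rw [← hc0]; exact opNormA_nonneg A Us
    · have := h4
      rw [sq] at this
      exact le_of_mul_le_mul_right (by linarith [this]) hc0
  exact le_antisymm (main R Rs hR) (main Rs R (adjPair_symm hB hR))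

lemma wA_neg (A R : H →L[ℂ] H) : wA A (-R) = wA A R := by
  unfold wA
  congr 1
  ext c
  constructor <;> rintro ⟨x, hx, rfl⟩ <;> exact ⟨x, hx, by simp⟩

end Aux2

section Central

variable {H : Type*} [NormedAddCommGroup H] [InnerProductSpace ℂ H] [CompleteSpace H]

local notation "⟪" x ", " y "⟫" => @inner ℂ _ _ x y

variable {A B : H →L[ℂ] H}

lemma central (hB : SqrtData A B) {T S Ts Ss : H →L[ℂ] H}
    (hT : AdjPair A Ts T) (hS : AdjPair A Ss S) :
    opNormA A (T + S) ^ 2 ≤ opNormA A (T ∘L Ts + S ∘L Ss) + 2 * wA A (T ∘L Ss) := by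
  have hT' : AdjPair A T Ts := adjPair_symm hB hT
  have hS' : AdjPair A S Ss := adjPair_symm hB hS
  set N : ℝ := opNormA A (T ∘L Ts + S ∘L Ss) with hNdef
  set w : ℝ := wA A (T ∘L Ss) with hwdef
  have hN : 0 ≤ N := opNormA_nonneg _ _
  have hw : 0 ≤ w := wA_nonneg _ _
  have hTS : AdjPair A (T + S) (Ts + Ss) := adjPair_add hB hT' hS'
  have hTsSs : AdjPair A (Ts + Ss) (T + S) := adjPair_add hB hT hS
  have hRR : AdjPair A (T ∘L Ts + S ∘L Ss) (T ∘L Ts + S ∘L Ss) :=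
    adjPair_add hB (adjPair_comp hB hT' hT) (adjPair_comp hB hS' hS)
  have hTSs : AdjPair A (T ∘L Ss) (S ∘L Ts) := adjPair_comp hB hT' hS
  have key : ∀ y, vnormA A y = 1 → vnormA A ((Ts + Ss) y) ^ 2 ≤ N + 2 * w := by
    intro y hy
    have e0 : vnormA A ((Ts + Ss) y) ^ 2 = RCLike.re ⟪A ((Ts + Ss) y), (Ts + Ss) y⟫ := by
      rw [vnorm_eq hB]; exact normB_sq hB _
    have e1 : ⟪A ((Ts + Ss) y), (Ts + Ss) y⟫ = ⟪A y, (T + S) ((Ts + Ss) y)⟫ := hTsSs y _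
    have e2 : (T + S) ((Ts + Ss) y) = (T ∘L Ts + S ∘L Ss) y + ((T ∘L Ss) y + S (Ts y)) := by
      simp only [ContinuousLinearMap.add_apply, ContinuousLinearMap.comp_apply, map_add]
      abel
    set c : ℂ := ⟪A ((T ∘L Ss) y), y⟫ with hc
    have e3 : ⟪A y, (T ∘L Ss) y⟫ = (starRingEnd ℂ) c := by
      rw [hc, ← inner_conj_symm, hAsym hB]
    have e4 : ⟪A y, S (Ts y)⟫ = c := by
      rw [← hS y (Ts y), ← hT' (Ss y) y, hc]
      rfl
    have hre : RCLike.re ⟪A ((Ts + Ss) y), (Ts + Ss) y⟫ =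
        RCLike.re ⟪A y, (T ∘L Ts + S ∘L Ss) y⟫ + (RCLike.re ((starRingEnd ℂ) c) +
          RCLike.re c) := by
      rw [e1, e2, inner_add_right, inner_add_right, e3, e4, map_add, map_add]
    have bound1 : RCLike.re ⟪A y, (T ∘L Ts + S ∘L Ss) y⟫ ≤ N := by
      calc RCLike.re ⟪A y, (T ∘L Ts + S ∘L Ss) y⟫
          ≤ ‖(⟪A y, (T ∘L Ts + S ∘L Ss) y⟫ : ℂ)‖ := RCLike.re_le_norm _
        _ ≤ ‖B y‖ * ‖B ((T ∘L Ts + S ∘L Ss) y)‖ := csA hB _ _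
        _ = vnormA A y * vnormA A ((T ∘L Ts + S ∘L Ss) y) := by
            rw [vnorm_eq hB, vnorm_eq hB]
        _ ≤ vnormA A y * (N * vnormA A y) :=
            mul_le_mul_of_nonneg_left (le_opNormA hB hRR y) (Real.sqrt_nonneg _)
        _ = N := by rw [hy]; ring
    have bound2 : RCLike.re ((starRingEnd ℂ) c) + RCLike.re c ≤ 2 * w := by
      have hrc : RCLike.re ((starRingEnd ℂ) c) = RCLike.re c := by
        simp [Complex.conj_re]
      have habs : ‖c‖ ≤ w := le_wA hB hTSs y hy
      have hre_le : RCLike.re c ≤ ‖c‖ := by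
        exact RCLike.re_le_norm c
      rw [hrc]
      linarith
    rw [e0, hre]
    linarith
  have h1 : opNormA A (T + S) = opNormA A (Ts + Ss) := opNormA_sharp hB hTS
  have h2 : opNormA A (Ts + Ss) ≤ Real.sqrt (N + 2 * w) := by
    apply opNormA_le _ (Real.sqrt_nonneg _)
    intro y hy
    calc vnormA A ((Ts + Ss) y) = Real.sqrt (vnormA A ((Ts + Ss) y) ^ 2) :=
          (Real.sqrt_sq (Real.sqrt_nonneg _)).symm
      _ ≤ Real.sqrt (N + 2 * w) := Real.sqrt_le_sqrt (key y hy)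
  calc opNormA A (T + S) ^ 2 = opNormA A (Ts + Ss) ^ 2 := by rw [h1]
    _ ≤ Real.sqrt (N + 2 * w) ^ 2 := by
        apply pow_le_pow_left₀ (opNormA_nonneg _ _) h2
    _ = N + 2 * w := Real.sq_sqrt (by linarith)

end Central

theorem stmt13 {H : Type*} [NormedAddCommGroup H] [InnerProductSpace ℂ H] [CompleteSpace H]
    (A : H →L[ℂ] H) (hA : A.IsPositive)
    (T S Ts Ss : H →L[ℂ] H)
    (hT : IsReducedAdjoint A T Ts) (hS : IsReducedAdjoint A S Ss) :
    max ((opNormA A (T + S)) ^ 2) ((opNormA A (T - S)) ^ 2) -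
        opNormA A (T ∘L Ts + S ∘L Ss) ≤ 2 * wA A (T ∘L Ss) := by
  obtain ⟨B, hB⟩ := sqrtData_exists A hA
  have hTad : AdjPair A Ts T := by
    intro x y
    have h1 : (A ∘L Ts) x = ((ContinuousLinearMap.adjoint T) ∘L A) x := by rw [hT.1]
    simp only [ContinuousLinearMap.comp_apply] at h1
    rw [show A (Ts x) = (ContinuousLinearMap.adjoint T) (A x) from h1]
    exact ContinuousLinearMap.adjoint_inner_left T y (A x)
  have hSad : AdjPair A Ss S := by
    intro x y
    have h1 : (A ∘L Ss) x = ((ContinuousLinearMap.adjoint S) ∘L A) x := by rw [hS.1]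
    simp only [ContinuousLinearMap.comp_apply] at h1
    rw [show A (Ss x) = (ContinuousLinearMap.adjoint S) (A x) from h1]
    exact ContinuousLinearMap.adjoint_inner_left S y (A x)
  have hplus := central hB hTad hSad
  have hSadneg : AdjPair A (-Ss) (-S) := adjPair_neg hB hSad
  have hminus := central hB hTad hSadneg
  have e1 : T + -S = T - S := (sub_eq_add_neg T S).symm
  have e2 : (-S) ∘L (-Ss) = S ∘L Ss := by ext x; simp
  have e3 : T ∘L (-Ss) = -(T ∘L Ss) := by ext x; simp
  rw [e1, e2, e3, wA_neg] at hminus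
  rw [sub_le_iff_le_add, max_le_iff]
  constructor <;> linarith
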